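/- The representation σ_j of osp(1|2) on G^j is irreducible: the only subspaces of G^j invariant under σ_j(f^+) and σ_j(f^-) are {0} and G^j. -/

import Mathlib

noncomputable section

/-- The structure constant `A(l,i,j) = ((−1)^{i−j}+1)/16·(i−j) +
((−1)^{i−j+1}+1)/16·(i+j−2l−1)`. -/
def A (l : ℕ) (i j : ℤ) : ℂ :=
  (((-1 : ℂ) ^ (i - j) + 1) / 16) * ((i : ℂ) - (j : ℂ)) +
    (((-1 : ℂ) ^ (i - j + 1) + 1) / 16) * ((i : ℂ) + (j : ℂ) - 2 * (l : ℂ) - 1)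

/-- The basis vector `f_r` of `G^j`, with the convention `f_r = 0` for `r`
outside `{j,…,2l−j}`; modeled inside `ℤ →₀ ℂ`. -/
def fv (l j : ℕ) (r : ℤ) : ℤ →₀ ℂ :=
  if (j : ℤ) ≤ r ∧ r ≤ 2 * l - j then Finsupp.single r 1 else 0

/-- The raising operator `σ_j(f^+) f_i = A(l,i+1,j) f_{i+1}`. -/
def sFp (l j : ℕ) : (ℤ →₀ ℂ) →ₗ[ℂ] (ℤ →₀ ℂ) :=
  Finsupp.lsum ℂ fun i => LinearMap.toSpanSingleton ℂ _ (A l (i + 1) j • fv l j (i + 1))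

/-- The lowering operator `σ_j(f^-) f_i = f_{i−1}`. -/
def sFm (l j : ℕ) : (ℤ →₀ ℂ) →ₗ[ℂ] (ℤ →₀ ℂ) :=
  Finsupp.lsum ℂ fun i => LinearMap.toSpanSingleton ℂ _ (fv l j (i - 1))

/-- `σ_j(h) = 2{σ_j(f^+), σ_j(f^-)}`. -/
def sH (l j : ℕ) : (ℤ →₀ ℂ) →ₗ[ℂ] (ℤ →₀ ℂ) :=
  (2 : ℂ) • (sFp l j ∘ₗ sFm l j + sFm l j ∘ₗ sFp l j)

/-- `σ_j(e^+) = 2{σ_j(f^+), σ_j(f^+)} = 4 σ_j(f^+)²`. -/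
def sEp (l j : ℕ) : (ℤ →₀ ℂ) →ₗ[ℂ] (ℤ →₀ ℂ) := (4 : ℂ) • (sFp l j ∘ₗ sFp l j)

/-- `σ_j(e^-) = −2{σ_j(f^-), σ_j(f^-)} = −4 σ_j(f^-)²`. -/
def sEm (l j : ℕ) : (ℤ →₀ ℂ) →ₗ[ℂ] (ℤ →₀ ℂ) := (-4 : ℂ) • (sFm l j ∘ₗ sFm l j)

/-- The module `G^j = ℂ^{2l−2j+1}`, spanned by the `f_i`, `j ≤ i ≤ 2l−j`. -/
def Gmod (l j : ℕ) : Submodule ℂ (ℤ →₀ ℂ) :=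
  Submodule.span ℂ
    {x | ∃ i : ℤ, (j : ℤ) ≤ i ∧ i ≤ 2 * l - j ∧ x = Finsupp.single i 1}

lemma sFm_single (l j : ℕ) (i : ℤ) (c : ℂ) :
    sFm l j (Finsupp.single i c) = c • fv l j (i - 1) := by
  rw [sFm, Finsupp.lsum_single, LinearMap.toSpanSingleton_apply]

lemma sFp_single (l j : ℕ) (i : ℤ) (c : ℂ) :
    sFp l j (Finsupp.single i c) = c • (A l (i+1) j • fv l j (i + 1)) := by
  rw [sFp, Finsupp.lsum_single, LinearMap.toSpanSingleton_apply]

lemma sFm_fv (l j : ℕ) (i : ℤ) (hi : i ≤ 2 * l - j) :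
    sFm l j (fv l j i) = fv l j (i - 1) := by
  rw [fv]
  split_ifs with h
  · rw [sFm_single, one_smul]
  · push_neg at h
    rw [map_zero, fv, if_neg]
    rintro ⟨h1, h2⟩
    have := h (by omega)
    omega

lemma sFm_pow_fv (l j : ℕ) (k : ℕ) : ∀ i : ℤ, i ≤ 2 * l - j →
    (sFm l j ^ k) (fv l j i) = fv l j (i - k) := by
  induction k with
  | zero => intro i _; simp
  | succ k ih =>
    intro i hi
    rw [pow_succ', Module.End.mul_apply, ih i hi, sFm_fv l j (i - k) (by omega)]
    congr 1
    push_cast; ring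

lemma A_ne_zero (l j : ℕ) (i : ℤ) (h1 : (j:ℤ) ≤ i) (h2 : i < 2 * l - j) :
    A l (i + 1) j ≠ 0 := by
  rw [A]
  have h16 : (16 : ℂ) ≠ 0 := by norm_num
  rcases Int.even_or_odd (i - j) with he | ho
  · have e1 : Odd (i + 1 - j) := by
      rcases he with ⟨t, ht⟩; exact ⟨t, by omega⟩
    have e2 : Even (i + 1 - j + 1) := by
      rcases he with ⟨t, ht⟩; exact ⟨t + 1, by omega⟩
    rw [Odd.neg_one_zpow e1, Even.neg_one_zpow e2]
    have hij : (i : ℂ) + 1 + j - 2 * l - 1 ≠ 0 := by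
      intro hc
      have : ((i + j - 2 * l : ℤ) : ℂ) = 0 := by push_cast; linear_combination hc
      have := ((Int.cast_eq_zero (α := ℂ)).mp this)
      omega
    simp only [neg_add_cancel, zero_div, zero_mul, zero_add]
    intro hc
    apply hij
    have : ((1:ℂ)+1)/16 ≠ 0 := by norm_num
    field_simp at hc
    push_cast at hc; linear_combination hc / 2
  · have e1 : Even (i + 1 - j) := by
      rcases ho with ⟨t, ht⟩; exact ⟨t + 1, by omega⟩
    have e2 : Odd (i + 1 - j + 1) := by
      rcases ho with ⟨t, ht⟩; exact ⟨t + 1, by omega⟩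
    rw [Even.neg_one_zpow e1, Odd.neg_one_zpow e2]
    have hij : (i : ℂ) + 1 - j ≠ 0 := by
      intro hc
      have : ((i + 1 - j : ℤ) : ℂ) = 0 := by push_cast; linear_combination hc
      have := ((Int.cast_eq_zero (α := ℂ)).mp this)
      omega
    simp only [neg_add_cancel, zero_div, zero_mul, add_zero]
    intro hc
    apply hij
    field_simp at hc
    push_cast at hc; linear_combination hc / 2

lemma fv_in_range (l j : ℕ) (r : ℤ) (h1 : (j:ℤ) ≤ r) (h2 : r ≤ 2 * l - j) :
    fv l j r = Finsupp.single r 1 := if_pos ⟨h1, h2⟩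

lemma fv_out (l j : ℕ) (r : ℤ) (h : ¬((j:ℤ) ≤ r ∧ r ≤ 2 * l - j)) :
    fv l j r = 0 := if_neg h

lemma Gmod_eq (l j : ℕ) :
    Gmod l j = Finsupp.supported ℂ ℂ (Set.Icc (j:ℤ) (2 * l - j)) := by
  rw [Finsupp.supported_eq_span_single, Gmod]
  congr 1
  ext x
  constructor
  · rintro ⟨i, h1, h2, rfl⟩; exact ⟨i, ⟨h1, h2⟩, rfl⟩
  · rintro ⟨i, ⟨h1, h2⟩, rfl⟩; exact ⟨i, h1, h2, rfl⟩

/-- the representation `σ_j` of `osp(1|2)` on `G^j` is irreducible: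
the only subspaces of `G^j` invariant under `σ_j(f^+)` and `σ_j(f^-)` are `{0}`
and `G^j` itself. -/
theorem sigma_j_irreducible (l j : ℕ) (hl : 1 ≤ l) (hj : j ≤ l)
    (X : Submodule ℂ (ℤ →₀ ℂ)) (hX : X ≤ Gmod l j)
    (hFp : ∀ x ∈ X, sFp l j x ∈ X) (hFm : ∀ x ∈ X, sFm l j x ∈ X) :
    X = ⊥ ∨ X = Gmod l j := by
  by_cases hbot : X = ⊥
  · exact Or.inl hbot
  right
  obtain ⟨x, hxX, hx0⟩ := Submodule.ne_bot_iff X |>.mp hbot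
  have hpowmem : ∀ k : ℕ, ∀ y ∈ X, (sFm l j ^ k) y ∈ X := by
    intro k
    induction k with
    | zero => intro y hy; simpa using hy
    | succ k ih =>
      intro y hy
      rw [pow_succ, Module.End.mul_apply]
      exact ih _ (hFm y hy)
  -- support bound
  have hsupp : ∀ a ∈ x.support, (j:ℤ) ≤ a ∧ a ≤ 2 * l - j := by
    have := hX hxX
    rw [Gmod_eq, Finsupp.mem_supported] at this
    intro a ha
    exact this ha
  have hne : x.support.Nonempty := Finsupp.support_nonempty_iff.mpr hx0
  set m := x.support.max' hne with hm
  have hmmem : m ∈ x.support := x.support.max'_mem hne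
  obtain ⟨hmj, hml⟩ := hsupp m hmmem
  set k := (m - j).toNat with hk
  have hkz : (k : ℤ) = m - j := Int.toNat_of_nonneg (by omega)
  -- compute (sFm^k) x
  have hx1 : (sFm l j ^ k) x = ∑ a ∈ x.support, x a • fv l j (a - k) := by
    conv_lhs => rw [← Finsupp.sum_single x]
    rw [Finsupp.sum, map_sum]
    refine Finset.sum_congr rfl fun a ha => ?_
    obtain ⟨ha1, ha2⟩ := hsupp a ha
    have : Finsupp.single a (x a) = x a • fv l j a := by
      rw [fv_in_range l j a ha1 ha2, Finsupp.smul_single', mul_one]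
    rw [this, map_smul, sFm_pow_fv l j k a ha2]
  have hx2 : (sFm l j ^ k) x = x m • Finsupp.single (j:ℤ) (1:ℂ) := by
    rw [hx1, Finset.sum_eq_single m]
    · rw [show m - (k:ℤ) = (j:ℤ) by omega,
        fv_in_range l j j le_rfl (by push_cast; omega)]
    · intro b hb hbm
      have hbmax := x.support.le_max' b hb
      have hbm' : b < m := lt_of_le_of_ne hbmax hbm
      rw [fv_out l j (b - k) (by rw [hkz]; rintro ⟨c1, c2⟩; omega), smul_zero]
    · intro h; exact absurd hmmem h
  have hxm : x m ≠ 0 := Finsupp.mem_support_iff.mp hmmem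
  have hfj : (Finsupp.single (j:ℤ) (1:ℂ)) ∈ X := by
    have := hpowmem k x hxX
    rw [hx2] at this
    have := X.smul_mem (x m)⁻¹ this
    rwa [inv_smul_smul₀ hxm] at this
  -- generate all basis vectors
  have hgen : ∀ n : ℕ, (j:ℤ) + n ≤ 2 * l - j → (Finsupp.single ((j:ℤ) + n) (1:ℂ)) ∈ X := by
    intro n
    induction n with
    | zero => intro _; simpa using hfj
    | succ n ih =>
      intro hn
      have hn' : (j:ℤ) + n ≤ 2 * l - j := by push_cast at hn ⊢; omega
      have hmem := hFp _ (ih hn')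
      rw [sFp_single, one_smul,
        fv_in_range l j ((j:ℤ) + n + 1) (by omega) (by push_cast at hn ⊢; omega)] at hmem
      have hA : A l ((j:ℤ) + n + 1) j ≠ 0 :=
        A_ne_zero l j ((j:ℤ) + n) (by omega) (by push_cast at hn ⊢; omega)
      have := X.smul_mem (A l ((j:ℤ) + n + 1) j)⁻¹ hmem
      rw [inv_smul_smul₀ hA] at this
      convert this using 2
      push_cast; ring
  refine le_antisymm hX ?_
  rw [Gmod]
  refine Submodule.span_le.mpr ?_
  rintro y ⟨i, h1, h2, rfl⟩
  have hiz : ((i - j).toNat : ℤ) = i - j := Int.toNat_of_nonneg (by omega)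
  have := hgen (i - j).toNat (by omega)
  rwa [show (j:ℤ) + (i - j).toNat = i by omega] at this
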